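/- Let (G,m,w,B) be a connected weighted finite graph with boundary. Then the equality μ_{i+|B|} = λ_i cannot hold simultaneously for all i = 1, 2, …, |Ω|. -/

import Mathlib

open Finset

noncomputable section

/-- The weighted graph Laplacian `Δ`. -/
def glap {V : Type*} [Fintype V] (m : V → ℝ) (w : V → V → ℝ) (u : V → ℝ) (x : V) : ℝ :=
  (1 / m x) * ∑ y, (u y - u x) * w x y

/-- Extension by zero to the boundary. -/
def E0 {V : Type*} [DecidableEq V] (B : Finset V) (u : {x : V // x ∉ B} → ℝ) (x : V) : ℝ :=
  if h : x ∈ B then 0 else u ⟨x, h⟩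

/-- The normal extension. -/
def N0 {V : Type*} [Fintype V] [DecidableEq V] (w : V → V → ℝ) (B : Finset V)
    (u : {x : V // x ∉ B} → ℝ) (x : V) : ℝ :=
  if h : x ∈ B then
    (∑ y : {x : V // x ∉ B}, u y * w x y.1) / (∑ y : {x : V // x ∉ B}, w x y.1)
  else u ⟨x, h⟩

/-- The Dirichlet Laplacian `Δ^D`. -/
def dlap {V : Type*} [Fintype V] [DecidableEq V] (m : V → ℝ) (w : V → V → ℝ) (B : Finset V)
    (u : {x : V // x ∉ B} → ℝ) (x : {x : V // x ∉ B}) : ℝ :=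
  glap m w (E0 B u) x.1

/-- The Neumann Laplacian `Δ^N`. -/
def nlap {V : Type*} [Fintype V] [DecidableEq V] (m : V → ℝ) (w : V → V → ℝ) (B : Finset V)
    (u : {x : V // x ∉ B} → ℝ) (x : {x : V // x ∉ B}) : ℝ :=
  glap m w (N0 w B u) x.1

/-- The Laplacian `Δ_Ω` of the induced interior subgraph. -/
def olap {V : Type*} [Fintype V] [DecidableEq V] (m : V → ℝ) (w : V → V → ℝ) (B : Finset V)
    (u : {x : V // x ∉ B} → ℝ) (x : {x : V // x ∉ B}) : ℝ :=
  (1 / m x.1) * ∑ y : {x : V // x ∉ B}, (u y - u x) * w x.1 y.1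

/-- The weighted boundary vertex degree `Deg_b`. -/
def degb {V : Type*} [DecidableEq V] (m : V → ℝ) (w : V → V → ℝ) (B : Finset V) (x : V) : ℝ :=
  (1 / m x) * ∑ y ∈ B, w x y

/-- The operator `T = A_B ∘ Deg⁻¹ ∘ A_Ω`. -/
def bop {V : Type*} [Fintype V] [DecidableEq V] (m : V → ℝ) (w : V → V → ℝ) (B : Finset V)
    (u : {x : V // x ∉ B} → ℝ) (z : {x : V // x ∉ B}) : ℝ :=
  (1 / m z.1) * ∑ x ∈ B, w x z.1 *
    ((∑ y : {x : V // x ∉ B}, u y * w x y.1) / (∑ y : {x : V // x ∉ B}, w x y.1))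

/-- The Bakry–Émery `Γ` operator of a Laplacian-type operator `L`. -/
def gam {W : Type*} (L : (W → ℝ) → (W → ℝ)) (f g : W → ℝ) (x : W) : ℝ :=
  (L (fun y => f y * g y) x - f x * L g x - g x * L f x) / 2

/-- The Bakry–Émery `Γ₂` operator of a Laplacian-type operator `L`. -/
def gam2 {W : Type*} (L : (W → ℝ) → (W → ℝ)) (f : W → ℝ) (x : W) : ℝ :=
  L (gam L f f) x / 2 - gam L f (L f) x

/-- `e` is a complete list of the eigenvalues of `L` : there is a corresponding eigenbasis
which is orthonormal with respect to the inner product weighted by `m`. -/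
def IsEigenBasis {n : ℕ} {W : Type*} [Fintype W] (m : W → ℝ)
    (L : (W → ℝ) → (W → ℝ)) (e : Fin n → ℝ) : Prop :=
  ∃ φ : Fin n → W → ℝ,
    (∀ i j, (∑ x, φ i x * φ j x * m x) = if i = j then 1 else 0) ∧
    ∀ i, L (φ i) = fun x => e i * φ i x


open Matrix


lemma ortho_complete {W : Type*} [Fintype W] [DecidableEq W] (m : W → ℝ) (hm : ∀ x, 0 < m x)
    (φ : Fin (Fintype.card W) → W → ℝ)
    (hφ : ∀ i j, (∑ x, φ i x * φ j x * m x) = if i = j then 1 else 0)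
    (x y : W) : (∑ i, φ i x * φ i y * m y) = if x = y then 1 else 0 := by
  classical
  set e : Fin (Fintype.card W) ≃ W := (Fintype.equivFin W).symm with he
  set A : Matrix (Fin (Fintype.card W)) (Fin (Fintype.card W)) ℝ :=
    fun i j => φ i (e j) * Real.sqrt (m (e j)) with hA
  have hsq : ∀ z, Real.sqrt (m z) * Real.sqrt (m z) = m z :=
    fun z => Real.mul_self_sqrt (le_of_lt (hm z))
  have hsqpos : ∀ z, 0 < Real.sqrt (m z) := fun z => Real.sqrt_pos.mpr (hm z)
  have hAAT : A * Aᵀ = 1 := by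
    ext i j
    rw [Matrix.mul_apply]
    have h1 : ∀ l, A i l * Aᵀ l j = φ i (e l) * φ j (e l) * m (e l) := by
      intro l
      rw [Matrix.transpose_apply]; simp only [hA]
      rw [show φ i (e l) * Real.sqrt (m (e l)) * (φ j (e l) * Real.sqrt (m (e l)))
          = φ i (e l) * φ j (e l) * (Real.sqrt (m (e l)) * Real.sqrt (m (e l))) from by ring,
        hsq (e l)]
    rw [Finset.sum_congr rfl (fun l _ => h1 l)]
    rw [Equiv.sum_comp e (fun z => φ i z * φ j z * m z)]
    rw [hφ i j, Matrix.one_apply]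
  have hATA : Aᵀ * A = 1 := mul_eq_one_comm.mp hAAT
  have h2 : (Aᵀ * A) (e.symm x) (e.symm y) = (1 : Matrix _ _ ℝ) (e.symm x) (e.symm y) := by
    rw [hATA]
  rw [Matrix.mul_apply, Matrix.one_apply] at h2
  have hxy : ((e.symm x = e.symm y) : Prop) = (x = y) := by
    simp [Equiv.apply_eq_iff_eq]
  have h3 : ∀ i, Aᵀ (e.symm x) i * A i (e.symm y)
      = (φ i x * φ i y) * (Real.sqrt (m x) * Real.sqrt (m y)) := by
    intro i
    rw [Matrix.transpose_apply]; simp only [hA, Equiv.apply_symm_apply]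
    ring
  rw [Finset.sum_congr rfl (fun i _ => h3 i), ← Finset.sum_mul] at h2
  by_cases hc : x = y
  · subst hc
    simp only [if_pos rfl] at h2 ⊢
    rw [hsq x] at h2
    calc (∑ i, φ i x * φ i x * m x) = (∑ i, φ i x * φ i x) * m x := by
          rw [Finset.sum_mul]
    _ = 1 := h2
  · have hne : ¬ (e.symm x = e.symm y) := fun h => hc (e.symm.injective h)
    rw [if_neg hne] at h2
    rw [if_neg hc]
    have hcne : Real.sqrt (m x) * Real.sqrt (m y) ≠ 0 :=
      ne_of_gt (mul_pos (hsqpos x) (hsqpos y))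
    have h4 : (∑ i, φ i x * φ i y) = 0 := by
      rcases mul_eq_zero.mp h2 with h | h
      · exact h
      · exact absurd h hcne
    calc (∑ i, φ i x * φ i y * m y) = (∑ i, φ i x * φ i y) * m y := by rw [Finset.sum_mul]
    _ = 0 := by rw [h4, zero_mul]

lemma low_eq {n k : ℕ} (hk : 0 < k) (hkn : k ≤ n) (f : Fin n → ℝ) :
    (∑ j ∈ Finset.range k, if h : j < n then f ⟨j, h⟩ else 0)
      = ∑ i ∈ Finset.univ.filter (fun i : Fin n => i.1 < k), f i := by
  classical
  have hn : 0 < n := lt_of_lt_of_le hk hkn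
  refine Finset.sum_nbij' (fun j => if h : j < n then (⟨j, h⟩ : Fin n) else ⟨0, hn⟩)
    (fun i => i.1) ?_ ?_ ?_ ?_ ?_
  · intro a ha
    rw [Finset.mem_range] at ha
    have han : a < n := lt_of_lt_of_le ha hkn
    simp [dif_pos han, ha]
  · intro i hi
    rw [Finset.mem_filter] at hi
    rw [Finset.mem_range]
    exact hi.2
  · intro a ha
    rw [Finset.mem_range] at ha
    have han : a < n := lt_of_lt_of_le ha hkn
    simp [dif_pos han]
  · intro i hi
    simp [i.2]
  · intro a ha
    rw [Finset.mem_range] at ha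
    have han : a < n := lt_of_lt_of_le ha hkn
    simp [dif_pos han]

lemma arith {n k : ℕ} (hk : 0 < k) (hkn : k ≤ n) (μ t : Fin n → ℝ) (hmono : Monotone μ)
    (ht0 : ∀ i, 0 ≤ t i) (ht1 : ∀ i, t i ≤ 1) (hts : ∑ i, t i = (k : ℝ))
    (hcardS : ∑ i ∈ Finset.univ.filter (fun i : Fin n => i.1 < k), (1 : ℝ) = k)
    (h1 : ∑ i ∈ Finset.univ.filter (fun i : Fin n => i.1 < k), μ i = ∑ i, μ i * t i) :
    ∑ i ∈ Finset.univ.filter (fun i : Fin n => i.1 < k), (μ i)^2 = ∑ i, (μ i)^2 * t i := by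
  classical
  set c : ℝ := μ ⟨k - 1, by omega⟩ with hc
  set S := Finset.univ.filter (fun i : Fin n => i.1 < k) with hS
  set S' := Finset.univ.filter (fun i : Fin n => ¬ i.1 < k) with hS'
  have hsplit : ∀ f : Fin n → ℝ, ∑ i ∈ S, f i + ∑ i ∈ S', f i = ∑ i, f i := fun f =>
    Finset.sum_filter_add_sum_filter_not _ _ f
  have hle : ∀ i ∈ S, μ i ≤ c := by
    intro i hi
    rw [hS, Finset.mem_filter] at hi
    exact hmono (show i ≤ ⟨k - 1, by omega⟩ by rw [Fin.le_def]; simp; omega)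
  have hge : ∀ i ∈ S', c ≤ μ i := by
    intro i hi
    rw [hS', Finset.mem_filter] at hi
    exact hmono (show (⟨k - 1, by omega⟩ : Fin n) ≤ i by rw [Fin.le_def]; simp; omega)
  have h1' : ∑ i ∈ S, μ i * (1 - t i) = ∑ i ∈ S', μ i * t i := by
    have e0 := hsplit (fun i => μ i * t i)
    have e1 : ∑ i ∈ S, μ i * (1 - t i) = ∑ i ∈ S, μ i - ∑ i ∈ S, μ i * t i := by
      rw [← Finset.sum_sub_distrib]
      exact Finset.sum_congr rfl fun i _ => by ring
    rw [e1]
    linarith [h1, e0]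
  have hts' : ∑ i ∈ S, (1 - t i) = ∑ i ∈ S', t i := by
    have e1 : ∑ i ∈ S, (1 - t i) = (∑ i ∈ S, (1:ℝ)) - ∑ i ∈ S, t i := by
      rw [← Finset.sum_sub_distrib]
    rw [e1]
    linarith [hcardS, hsplit t, hts]
  have key : ∑ i ∈ S, (c - μ i) * (1 - t i) + ∑ i ∈ S', (μ i - c) * t i = 0 := by
    have e1 : ∑ i ∈ S, (c - μ i) * (1 - t i)
        = c * (∑ i ∈ S, (1 - t i)) - ∑ i ∈ S, μ i * (1 - t i) := by
      rw [Finset.mul_sum, ← Finset.sum_sub_distrib]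
      exact Finset.sum_congr rfl fun i _ => by ring
    have e2 : ∑ i ∈ S', (μ i - c) * t i
        = ∑ i ∈ S', μ i * t i - c * (∑ i ∈ S', t i) := by
      rw [Finset.mul_sum, ← Finset.sum_sub_distrib]
      exact Finset.sum_congr rfl fun i _ => by ring
    rw [e1, e2, hts', h1']
    ring
  have hnn1 : ∀ i ∈ S, 0 ≤ (c - μ i) * (1 - t i) := fun i hi =>
    mul_nonneg (by linarith [hle i hi]) (by linarith [ht1 i])
  have hnn2 : ∀ i ∈ S', 0 ≤ (μ i - c) * t i := fun i hi =>
    mul_nonneg (by linarith [hge i hi]) (ht0 i)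
  have hz1 : ∑ i ∈ S, (c - μ i) * (1 - t i) = 0 := by
    have := Finset.sum_nonneg hnn1
    have := Finset.sum_nonneg hnn2
    linarith
  have hz2 : ∑ i ∈ S', (μ i - c) * t i = 0 := by linarith [Finset.sum_nonneg hnn1]
  have hA0 := (Finset.sum_eq_zero_iff_of_nonneg hnn1).mp hz1
  have hB0 := (Finset.sum_eq_zero_iff_of_nonneg hnn2).mp hz2
  have e3 : ∀ i ∈ S, (μ i)^2 * (1 - t i) = c^2 * (1 - t i) := by
    intro i hi
    linear_combination (-(μ i + c)) * hA0 i hi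
  have e4 : ∀ i ∈ S', (μ i)^2 * t i = c^2 * t i := by
    intro i hi
    linear_combination (μ i + c) * hB0 i hi
  have h5 : ∑ i ∈ S, (μ i)^2 * (1 - t i) = ∑ i ∈ S', (μ i)^2 * t i := by
    rw [Finset.sum_congr rfl e3, Finset.sum_congr rfl e4, ← Finset.mul_sum, ← Finset.mul_sum, hts']
  have e5 : ∑ i ∈ S, (μ i)^2 * (1 - t i) = ∑ i ∈ S, (μ i)^2 - ∑ i ∈ S, (μ i)^2 * t i := by
    rw [← Finset.sum_sub_distrib]
    exact Finset.sum_congr rfl fun i _ => by ring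
  have e6 := hsplit (fun i => (μ i)^2 * t i)
  linarith [h5, e5, e6]

lemma eig_sum {W : Type*} [Fintype W] [DecidableEq W] (m : W → ℝ) (hm : ∀ x, 0 < m x)
    (K : W → W → ℝ) (μ : Fin (Fintype.card W) → ℝ) (φ : Fin (Fintype.card W) → W → ℝ)
    (hφo : ∀ i j, (∑ x, φ i x * φ j x * m x) = if i = j then 1 else 0)
    (heig : ∀ i x, μ i * φ i x = ∑ y, K x y * φ i y) (S : Finset W) :
    (∑ i, μ i * (∑ x ∈ S, φ i x * φ i x * m x) = ∑ x ∈ S, K x x)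
    ∧ (∑ i, (μ i)^2 * (∑ x ∈ S, φ i x * φ i x * m x)
        = ∑ x ∈ S, ∑ z, (K x z)^2 * (m x / m z)) := by
  classical
  have comp2 : ∀ z z', (∑ i, φ i z * φ i z') = if z = z' then 1 / m z' else 0 := by
    intro z z'
    have h := ortho_complete m hm φ hφo z z'
    rw [← Finset.sum_mul] at h
    have hmz : m z' ≠ 0 := ne_of_gt (hm z')
    by_cases hc : z = z'
    · rw [if_pos hc] at h ⊢
      field_simp at h ⊢
      linarith
    · rw [if_neg hc] at h ⊢
      rcases mul_eq_zero.mp h with h' | h'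
      · exact h'
      · exact absurd h' hmz
  have E1 : ∀ x y, (∑ i, μ i * (φ i x * φ i y) * m y) = K x y := by
    intro x y
    calc ∑ i, μ i * (φ i x * φ i y) * m y
        = ∑ i, ∑ z, K x z * (φ i z * (φ i y * m y)) := by
          refine Finset.sum_congr rfl fun i _ => ?_
          rw [show μ i * (φ i x * φ i y) * m y = (μ i * φ i x) * (φ i y * m y) from by ring,
            heig i x, Finset.sum_mul]
          exact Finset.sum_congr rfl fun z _ => by ring
      _ = ∑ z, K x z * ((∑ i, φ i z * φ i y) * m y) := by
          rw [Finset.sum_comm]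
          refine Finset.sum_congr rfl fun z _ => ?_
          rw [← Finset.mul_sum]
          congr 1
          rw [Finset.sum_mul]
          exact Finset.sum_congr rfl fun i _ => by ring
      _ = K x y := by
          have hterm : ∀ z, K x z * ((∑ i, φ i z * φ i y) * m y)
              = if z = y then K x z else 0 := by
            intro z
            rw [comp2 z y]
            by_cases hc : z = y
            · rw [if_pos hc, if_pos hc]
              subst hc
              field_simp
              rw [mul_div_assoc, div_self (ne_of_gt (hm z)), mul_one]
            · rw [if_neg hc, if_neg hc]
              ring
          rw [Finset.sum_congr rfl fun z _ => hterm z]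
          simp
  have E2 : ∀ x y, (∑ i, (μ i)^2 * (φ i x * φ i y) * m y)
      = ∑ z, K x z * K y z * (m y / m z) := by
    intro x y
    calc ∑ i, (μ i)^2 * (φ i x * φ i y) * m y
        = ∑ i, ∑ z, ∑ z', (K x z * K y z') * (φ i z * φ i z') * m y := by
          refine Finset.sum_congr rfl fun i _ => ?_
          rw [show (μ i)^2 * (φ i x * φ i y) * m y
              = ((μ i * φ i x) * (μ i * φ i y)) * m y from by ring,
            heig i x, heig i y, Finset.sum_mul_sum, Finset.sum_mul]
          refine Finset.sum_congr rfl fun z _ => ?_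
          rw [Finset.sum_mul]
          exact Finset.sum_congr rfl fun z' _ => by ring
      _ = ∑ z, ∑ z', (K x z * K y z') * ((∑ i, φ i z * φ i z') * m y) := by
          rw [Finset.sum_comm]
          refine Finset.sum_congr rfl fun z _ => ?_
          rw [Finset.sum_comm]
          refine Finset.sum_congr rfl fun z' _ => ?_
          rw [← Finset.sum_mul, ← Finset.mul_sum, mul_assoc]
      _ = ∑ z, K x z * K y z * (m y / m z) := by
          refine Finset.sum_congr rfl fun z _ => ?_
          have hterm : ∀ z', (K x z * K y z') * ((∑ i, φ i z * φ i z') * m y)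
              = if z' = z then K x z * K y z' * (m y / m z') else 0 := by
            intro z'
            rw [comp2 z z']
            by_cases hc : z' = z
            · subst hc
              rw [if_pos rfl, if_pos rfl]
              have : m z' ≠ 0 := ne_of_gt (hm z')
              field_simp
            · rw [if_neg (fun h => hc h.symm), if_neg hc]
              ring
          rw [Finset.sum_congr rfl fun z' _ => hterm z']
          simp
  constructor
  · calc ∑ i, μ i * (∑ x ∈ S, φ i x * φ i x * m x)
        = ∑ i, ∑ x ∈ S, μ i * (φ i x * φ i x) * m x := by
          refine Finset.sum_congr rfl fun i _ => ?_
          rw [Finset.mul_sum]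
          exact Finset.sum_congr rfl fun x _ => by ring
      _ = ∑ x ∈ S, ∑ i, μ i * (φ i x * φ i x) * m x := Finset.sum_comm
      _ = ∑ x ∈ S, K x x := Finset.sum_congr rfl fun x _ => E1 x x
  · calc ∑ i, (μ i)^2 * (∑ x ∈ S, φ i x * φ i x * m x)
        = ∑ i, ∑ x ∈ S, (μ i)^2 * (φ i x * φ i x) * m x := by
          refine Finset.sum_congr rfl fun i _ => ?_
          rw [Finset.mul_sum]
          exact Finset.sum_congr rfl fun x _ => by ring
      _ = ∑ x ∈ S, ∑ i, (μ i)^2 * (φ i x * φ i x) * m x := Finset.sum_comm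
      _ = ∑ x ∈ S, ∑ z, K x z * K x z * (m x / m z) :=
          Finset.sum_congr rfl fun x _ => E2 x x
      _ = ∑ x ∈ S, ∑ z, (K x z)^2 * (m x / m z) := by
          refine Finset.sum_congr rfl fun x _ => Finset.sum_congr rfl fun z _ => by ring

theorem stmt_13 {V : Type*} [Fintype V] [DecidableEq V]
    (G : SimpleGraph V) (hconn : G.Connected)
    (m : V → ℝ) (hm : ∀ x, 0 < m x)
    (w : V → V → ℝ) (hwsymm : ∀ x y, w x y = w y x)
    (hwpos : ∀ x y, G.Adj x y → 0 < w x y)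
    (hw0 : ∀ x y, ¬ G.Adj x y → w x y = 0)
    (B : Finset V) (hB : B.Nonempty)
    (hBB : ∀ x ∈ B, ∀ y ∈ B, ¬ G.Adj x y)
    (hBint : ∀ x ∈ B, ∃ y, y ∉ B ∧ G.Adj x y)
    (μ : Fin (Fintype.card V) → ℝ) (hμmono : Monotone μ)
    (hμ : IsEigenBasis m (glap m w) (fun i => -(μ i)))
    (lam : Fin (Fintype.card {x : V // x ∉ B}) → ℝ) (hlammono : Monotone lam)
    (hlam : IsEigenBasis (fun x : {x : V // x ∉ B} => m x.1) (dlap m w B) (fun i => -(lam i)))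
    (hcard : Fintype.card {x : V // x ∉ B} + B.card = Fintype.card V)
    :
    ¬ (∀ i : Fin (Fintype.card {x : V // x ∉ B}), μ ⟨i.1 + B.card, by have h2 := i.2; omega⟩ = lam i) := by
  intro H
  classical
  obtain ⟨φ, hφo, hφe⟩ := hμ
  obtain ⟨ψ, hψo, hψe⟩ := hlam
  have hk0 : 0 < B.card := Finset.card_pos.mpr hB
  have hkn : B.card ≤ Fintype.card V := by omega
  set D : V → ℝ := fun x => (∑ z, w x z) / m x with hD
  set K : V → V → ℝ := fun x y => (if y = x then D x else 0) - w x y / m x with hKdef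
  -- kernel representation of -glap
  have hKrep : ∀ (f : V → ℝ) (x : V), (∑ y, K x y * f y) = -(glap m w f x) := by
    intro f x
    have hmx : m x ≠ 0 := ne_of_gt (hm x)
    have e0 : ∑ y, (f y - f x) * w x y = (∑ y, w x y * f y) - (∑ y, w x y) * f x := by
      rw [Finset.sum_mul, ← Finset.sum_sub_distrib]
      exact Finset.sum_congr rfl fun y _ => by ring
    calc ∑ y, K x y * f y
        = ∑ y, ((if y = x then D x * f y else 0) - (w x y * f y) / m x) := by
          refine Finset.sum_congr rfl fun y _ => ?_
          simp only [hKdef]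
          by_cases hc : y = x
          · rw [if_pos hc, if_pos hc]; ring
          · rw [if_neg hc, if_neg hc]; ring
      _ = (∑ y, if y = x then D x * f y else 0) - (∑ y, (w x y * f y) / m x) :=
          Finset.sum_sub_distrib _ _
      _ = D x * f x - (∑ y, w x y * f y) / m x := by
          rw [Finset.sum_ite_eq' Finset.univ x (fun y => D x * f y),
            if_pos (Finset.mem_univ x), ← Finset.sum_div]
      _ = -(glap m w f x) := by
          rw [glap, e0, hD]
          field_simp
          ring
  have hKeig : ∀ i x, μ i * φ i x = ∑ y, K x y * φ i y := by
    intro i x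
    rw [hKrep]
    simp only [hφe]
    ring
  have hsub : ∀ f : V → ℝ, (∑ y : {x : V // x ∉ B}, f y.1) = ∑ y ∈ Bᶜ, f y := by
    intro f
    exact (Finset.sum_subtype Bᶜ (fun x => Finset.mem_compl) f).symm
  have hsplitV : ∀ f : V → ℝ, (∑ y, f y) = (∑ y ∈ B, f y) + ∑ y ∈ Bᶜ, f y :=
    fun f => (Finset.sum_add_sum_compl B f).symm
  have hKDeig : ∀ i (x : {x : V // x ∉ B}),
      lam i * ψ i x = ∑ y : {x : V // x ∉ B}, K x.1 y.1 * ψ i y := by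
    intro i x
    have h2 : dlap m w B (ψ i) x = -(lam i) * ψ i x := by rw [hψe i]
    have h3 : -(glap m w (E0 B (ψ i)) x.1) = lam i * ψ i x := by
      rw [show glap m w (E0 B (ψ i)) x.1 = dlap m w B (ψ i) x from rfl, h2]; ring
    rw [← h3, ← hKrep]
    rw [hsplitV (fun y => K x.1 y * E0 B (ψ i) y)]
    have hBzero : (∑ y ∈ B, K x.1 y * E0 B (ψ i) y) = 0 := by
      refine Finset.sum_eq_zero fun y hy => ?_
      rw [E0, dif_pos hy, mul_zero]
    rw [hBzero, zero_add, ← hsub (fun y => K x.1 y * E0 B (ψ i) y)]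
    refine Finset.sum_congr rfl fun y _ => ?_
    rw [E0, dif_neg y.2]
  -- spectral sums
  have hVuniv := eig_sum m hm K μ φ hφo hKeig Finset.univ
  have hVB := eig_sum m hm K μ φ hφo hKeig B
  have hΩ := eig_sum (fun x : {x : V // x ∉ B} => m x.1) (fun x => hm x.1)
      (fun a b => K a.1 b.1) lam ψ hψo (fun i x => hKDeig i x) Finset.univ
  have hnorm : ∀ i, (∑ x, φ i x * φ i x * m x) = 1 := fun i => by
    have := hφo i i; rwa [if_pos rfl] at this
  have hnormψ : ∀ i, (∑ x : {x : V // x ∉ B}, ψ i x * ψ i x * m x.1) = 1 := fun i => by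
    have := hψo i i; rwa [if_pos rfl] at this
  have T1 : (∑ i, μ i) = ∑ x, K x x := by
    have h := hVuniv.1; simp only [hnorm, mul_one] at h; exact h
  have T3 : (∑ i, (μ i)^2) = ∑ x, ∑ z, (K x z)^2 * (m x / m z) := by
    have h := hVuniv.2; simp only [hnorm, mul_one] at h; exact h
  have S1 : (∑ j, lam j) = ∑ x : {x : V // x ∉ B}, K x.1 x.1 := by
    have h := hΩ.1; simp only [hnormψ, mul_one] at h; exact h
  have S3 : (∑ j, (lam j)^2)
      = ∑ x : {x : V // x ∉ B}, ∑ z : {x : V // x ∉ B}, (K x.1 z.1)^2 * (m x.1 / m z.1) := by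
    have h := hΩ.2; simp only [hnormψ, mul_one] at h; exact h
  set t : Fin (Fintype.card V) → ℝ := fun i => ∑ x ∈ B, φ i x * φ i x * m x with ht
  have T2 : (∑ i, μ i * t i) = ∑ x ∈ B, K x x := hVB.1
  have T4 : (∑ i, (μ i)^2 * t i) = ∑ x ∈ B, ∑ z, (K x z)^2 * (m x / m z) := hVB.2
  have ht0 : ∀ i, 0 ≤ t i := fun i =>
    Finset.sum_nonneg fun x _ => mul_nonneg (mul_self_nonneg _) (le_of_lt (hm x))
  have ht1 : ∀ i, t i ≤ 1 := fun i => by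
    rw [← hnorm i]
    exact Finset.sum_le_sum_of_subset_of_nonneg (Finset.subset_univ B)
      (fun x _ _ => mul_nonneg (mul_self_nonneg _) (le_of_lt (hm x)))
  have hx1 : ∀ x : V, (∑ i, φ i x * φ i x * m x) = 1 := fun x => by
    have := ortho_complete m hm φ hφo x x; rwa [if_pos rfl] at this
  have hts : (∑ i, t i) = (B.card : ℝ) := by
    calc (∑ i, t i) = ∑ x ∈ B, ∑ i, φ i x * φ i x * m x := Finset.sum_comm
      _ = ∑ x ∈ B, (1:ℝ) := Finset.sum_congr rfl fun x _ => hx1 x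
      _ = B.card := by rw [Finset.sum_const, nsmul_eq_mul, mul_one]
  -- index splitting
  have hsplitF : ∀ f : Fin (Fintype.card V) → ℝ, (∑ i, f i)
      = (∑ j ∈ Finset.range B.card, if h : j < Fintype.card V then f ⟨j, h⟩ else 0)
        + ∑ i : Fin (Fintype.card {x : V // x ∉ B}), f ⟨i.1 + B.card, by have h2 := i.2; omega⟩ := by
    intro f
    set g : ℕ → ℝ := fun j => if h : j < Fintype.card V then f ⟨j, h⟩ else 0 with hg
    have hgval : ∀ (j : ℕ) (h : j < Fintype.card V), g j = f ⟨j, h⟩ := by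
      intro j h
      simp only [hg]
      exact dif_pos h
    have e1 : (∑ i, f i) = ∑ j ∈ Finset.range (Fintype.card V), g j := by
      rw [← Fin.sum_univ_eq_sum_range]
      refine Finset.sum_congr rfl fun i _ => ?_
      rw [hgval i.1 i.2]
    rw [e1, show Finset.range (Fintype.card V)
        = Finset.range (B.card + Fintype.card {x : V // x ∉ B}) from by
          rw [show B.card + Fintype.card {x : V // x ∉ B} = Fintype.card V from by omega],
      Finset.sum_range_add]
    congr 1
    rw [← Fin.sum_univ_eq_sum_range (fun j => g (B.card + j)) (Fintype.card {x : V // x ∉ B})]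
    refine Finset.sum_congr rfl fun i _ => ?_
    have hlt : B.card + i.1 < Fintype.card V := by have h2 := i.2; omega
    show g (B.card + i.1) = _
    rw [hgval _ hlt]
    exact congrArg f (Fin.ext (by simp [Nat.add_comm]))
  have hcardS : (∑ i ∈ Finset.univ.filter
      (fun i : Fin (Fintype.card V) => i.1 < B.card), (1:ℝ)) = B.card := by
    rw [← low_eq hk0 hkn (fun _ => (1:ℝ))]
    calc (∑ j ∈ Finset.range B.card, if h : j < Fintype.card V then (1:ℝ) else 0)
        = ∑ j ∈ Finset.range B.card, (1:ℝ) :=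
          Finset.sum_congr rfl fun j hj =>
            dif_pos (lt_of_lt_of_le (Finset.mem_range.mp hj) hkn)
      _ = B.card := by rw [Finset.sum_const, nsmul_eq_mul, mul_one, Finset.card_range]
  have hΩdiag : (∑ x : {x : V // x ∉ B}, K x.1 x.1) = ∑ x ∈ Bᶜ, K x x :=
    hsub (fun x => K x x)
  have hhigh1 : (∑ i : Fin (Fintype.card {x : V // x ∉ B}),
      μ ⟨i.1 + B.card, by have h2 := i.2; omega⟩) = ∑ i, lam i :=
    Finset.sum_congr rfl fun i _ => H i
  have hG1 : (∑ i ∈ Finset.univ.filter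
      (fun i : Fin (Fintype.card V) => i.1 < B.card), μ i) = ∑ i, μ i * t i := by
    rw [← low_eq hk0 hkn μ, T2]
    have h1 := hsplitF μ
    have h2 := hsplitV (fun x => K x x)
    linarith [h1, hhigh1, T1, S1, hΩdiag, h2]
  -- squares
  have hS3' : (∑ j, (lam j)^2) = ∑ x ∈ Bᶜ, ∑ z ∈ Bᶜ, (K x z)^2 * (m x / m z) := by
    rw [S3]
    rw [Finset.sum_congr rfl
      (fun (x : {x : V // x ∉ B}) (_ : x ∈ (Finset.univ : Finset {x : V // x ∉ B})) =>
        hsub (fun z => (K x.1 z)^2 * (m x.1 / m z)))]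
    exact hsub (fun xx => ∑ z ∈ Bᶜ, (K xx z)^2 * (m xx / m z))
  have hdouble : (∑ x, ∑ z, (K x z)^2 * (m x / m z))
      = (∑ x ∈ B, ∑ z, (K x z)^2 * (m x / m z))
        + ((∑ x ∈ Bᶜ, ∑ z ∈ B, (K x z)^2 * (m x / m z))
          + ∑ x ∈ Bᶜ, ∑ z ∈ Bᶜ, (K x z)^2 * (m x / m z)) := by
    rw [hsplitV (fun x => ∑ z, (K x z)^2 * (m x / m z))]
    congr 1
    calc (∑ x ∈ Bᶜ, ∑ z, (K x z)^2 * (m x / m z))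
        = ∑ x ∈ Bᶜ, ((∑ z ∈ B, (K x z)^2 * (m x / m z)) + ∑ z ∈ Bᶜ, (K x z)^2 * (m x / m z)) :=
          Finset.sum_congr rfl fun x _ => hsplitV (fun z => (K x z)^2 * (m x / m z))
      _ = _ := Finset.sum_add_distrib
  have hhigh2 : (∑ i : Fin (Fintype.card {x : V // x ∉ B}),
      (μ ⟨i.1 + B.card, by have h2 := i.2; omega⟩)^2) = ∑ j, (lam j)^2 :=
    Finset.sum_congr rfl fun i _ => by rw [H i]
  have hG2 : (∑ i ∈ Finset.univ.filter
        (fun i : Fin (Fintype.card V) => i.1 < B.card), (μ i)^2)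
      = (∑ i, (μ i)^2 * t i) + ∑ x ∈ Bᶜ, ∑ z ∈ B, (K x z)^2 * (m x / m z) := by
    rw [← low_eq hk0 hkn (fun i => (μ i)^2), T4]
    have h1 := hsplitF (fun i => (μ i)^2)
    linarith [h1, hhigh2, T3, hS3', hdouble]
  -- positivity of P
  have hPpos : 0 < ∑ x ∈ Bᶜ, ∑ z ∈ B, (K x z)^2 * (m x / m z) := by
    obtain ⟨x₀, hx₀⟩ := hB
    obtain ⟨y₀, hy₀B, hy₀adj⟩ := hBint x₀ hx₀
    refine Finset.sum_pos'
      (fun x _ => Finset.sum_nonneg fun z _ =>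
        mul_nonneg (sq_nonneg _) (le_of_lt (div_pos (hm x) (hm z))))
      ⟨y₀, Finset.mem_compl.mpr hy₀B, ?_⟩
    refine Finset.sum_pos'
      (fun z _ => mul_nonneg (sq_nonneg _) (le_of_lt (div_pos (hm y₀) (hm z))))
      ⟨x₀, hx₀, ?_⟩
    have hne : ¬ (x₀ = y₀) := fun h => hy₀B (h ▸ hx₀)
    have hKval : K y₀ x₀ = -(w y₀ x₀ / m y₀) := by
      simp [hKdef, hne]
    have hwpos' : 0 < w y₀ x₀ := by rw [hwsymm]; exact hwpos x₀ y₀ hy₀adj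
    have hKne : K y₀ x₀ ≠ 0 := by
      rw [hKval]
      have : 0 < w y₀ x₀ / m y₀ := div_pos hwpos' (hm y₀)
      exact ne_of_lt (by linarith)
    exact mul_pos (pow_two_pos_of_ne_zero hKne) (div_pos (hm y₀) (hm x₀))
  have hzero := arith hk0 hkn μ t hμmono ht0 ht1 hts hcardS hG1
  rw [hG2] at hzero
  linarith [hzero, hPpos]
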